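/- Let λ, c > 0 and t > 0. Then the integral over the closed ball of radius ct in ℝ³ of the absolutely continuous density of X₃(t) equals the probability of at least one change of direction: ∫_{‖x‖ ≤ ct} (λ/(2c))² · (1/(π sinh(λt))) · I₁((λ/c)√(c²t² − ‖x‖²)) / √(c²t² − ‖x‖²) dx = 1 − λt/sinh(λt). -/

import Mathlib

open Real

/-- The modified Bessel function of order one,
`I₁(x) = Σ_{k=0}^∞ (x/2)^{2k+1} / (k! (k+1)!)`. -/
noncomputable def besselI1 (x : ℝ) : ℝ :=
  ∑' k : ℕ, (x / 2) ^ (2 * k + 1) / ((k.factorial : ℝ) * ((k + 1).factorial : ℝ))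

open MeasureTheory intervalIntegral in
lemma integral_sq_mul_pow (R : ℝ) : ∀ k : ℕ,
    ∫ x in (0:ℝ)..R, x ^ 2 * (R ^ 2 - x ^ 2) ^ k
      = 2 ^ (2 * k + 1) * (Nat.factorial k : ℝ) * (Nat.factorial (k+1) : ℝ) /
          (Nat.factorial (2 * k + 3) : ℝ) * R ^ (2 * k + 3) := by
  intro k
  induction k with
  | zero =>
    simp only [pow_zero, mul_one, integral_pow]
    norm_num [Nat.factorial]; ring
  | succ k ih =>
    have hv : ∀ x : ℝ, HasDerivAt (fun y : ℝ => (R^2 - y^2)^(k+1))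
        (-(2*((k:ℝ)+1)) * x * (R^2 - x^2)^k) x := by
      intro x
      have h1 : HasDerivAt (fun y : ℝ => R^2 - y^2) (-(2*x)) x := by
        exact ((hasDerivAt_const x (R^2)).sub (hasDerivAt_pow 2 x)).congr_deriv (by norm_num)
      have h2 := h1.pow (k+1)
      refine h2.congr_deriv ?_
      simp [Nat.add_sub_cancel]
      ring
    have hu : ∀ x : ℝ, HasDerivAt (fun y : ℝ => y^3/3) (x^2) x := by
      intro x
      have := (hasDerivAt_pow 3 x).div_const 3
      norm_num at this
      exact this
    have hparts := intervalIntegral.integral_mul_deriv_eq_deriv_mul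
      (u := fun y : ℝ => y^3/3) (v := fun y => (R^2 - y^2)^(k+1))
      (u' := fun y => y^2) (v' := fun y => -(2*((k:ℝ)+1)) * y * (R^2 - y^2)^k)
      (fun x _ => hu x) (fun x _ => hv x)
      ((continuous_pow 2).intervalIntegrable 0 R)
      (Continuous.intervalIntegrable (by fun_prop) 0 R)
    have h4 : ∫ x in (0:ℝ)..R, x^4*(R^2-x^2)^k
        = R^2 * (∫ x in (0:ℝ)..R, x^2*(R^2-x^2)^k)
          - ∫ x in (0:ℝ)..R, x^2*(R^2-x^2)^(k+1) := by
      rw [← intervalIntegral.integral_const_mul, ← intervalIntegral.integral_sub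
        (Continuous.intervalIntegrable (by fun_prop) 0 R)
        (Continuous.intervalIntegrable (by fun_prop) 0 R)]
      apply intervalIntegral.integral_congr
      intro x _
      ring
    have hL : ∫ x in (0:ℝ)..R, (x^3/3) * (-(2*((k:ℝ)+1)) * x * (R^2 - x^2)^k)
        = -(2*((k:ℝ)+1)/3) * ∫ x in (0:ℝ)..R, x^4*(R^2-x^2)^k := by
      rw [← intervalIntegral.integral_const_mul]
      apply intervalIntegral.integral_congr
      intro x _
      ring
    rw [hL, h4] at hparts
    have h5 : (2*(k:ℝ)+5) ≠ 0 := by positivity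
    have hsolve : (∫ x in (0:ℝ)..R, x^2*(R^2-x^2)^(k+1))
        = 2*((k:ℝ)+1)*R^2/(2*(k:ℝ)+5) * ∫ x in (0:ℝ)..R, x^2*(R^2-x^2)^k := by
      rw [div_mul_eq_mul_div, eq_div_iff h5]
      linear_combination (3 : ℝ) * hparts
    rw [hsolve, ih]
    have e1 : 2*(k+1)+3 = (2*k+3)+1+1 := by ring
    rw [e1, Nat.factorial_succ ((2*k+3)+1), Nat.factorial_succ (2*k+3),
      Nat.factorial_succ (k+1), Nat.factorial_succ k]
    have hf1 : ((2*k+3).factorial : ℝ) ≠ 0 := Nat.cast_ne_zero.2 (Nat.factorial_ne_zero _)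
    have hf2 : ((k).factorial : ℝ) ≠ 0 := Nat.cast_ne_zero.2 (Nat.factorial_ne_zero _)
    push_cast
    field_simp
    ring

lemma hasSum_sinh_sub (x : ℝ) :
    HasSum (fun k : ℕ => x ^ (2*k+3) / ((2*k+3).factorial : ℝ)) (Real.sinh x - x) := by
  have h := Real.hasSum_sinh x
  have h2 : HasSum ((fun n : ℕ => x ^ (2*n+1) / ((2*n+1).factorial : ℝ)) ∘ (· + 1))
      (Real.sinh x - x) := by
    apply (hasSum_nat_add_iff (f := fun n : ℕ => x ^ (2*n+1) / ((2*n+1).factorial : ℝ)) 1).2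
    simpa using h
  have hfun : (fun n : ℕ => x^(2*n+3)/((2*n+3).factorial : ℝ))
      = (fun n : ℕ => x ^ (2*n+1) / ((2*n+1).factorial : ℝ)) ∘ (· + 1) := by
    funext n
    simp only [Function.comp]
    norm_num [show 2*(n+1)+1 = 2*n+3 by ring]
  rw [hfun]; exact h2

open MeasureTheory in
lemma vol_ball3 : (volume (Metric.ball (0 : EuclideanSpace ℝ (Fin 3)) 1)).toReal = 4*π/3 := by
  rw [EuclideanSpace.volume_ball]
  have hg : Real.Gamma ((Fintype.card (Fin 3) : ℝ)/2 + 1) = 3*Real.sqrt π/4 := by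
    rw [Fintype.card_fin]
    push_cast
    rw [Real.Gamma_add_one (by norm_num),
      show (3:ℝ)/2 = 1/2 + 1 by norm_num, Real.Gamma_add_one (by norm_num),
      Real.Gamma_one_half_eq]
    ring
  rw [hg, ENNReal.toReal_mul, ENNReal.toReal_pow, ENNReal.toReal_ofReal (by norm_num),
    ENNReal.toReal_ofReal (by positivity)]
  rw [Fintype.card_fin, show Real.sqrt π ^ 3 = π * Real.sqrt π by
    rw [pow_succ, Real.sq_sqrt pi_pos.le]]
  have : Real.sqrt π ≠ 0 := by positivity
  field_simp

open MeasureTheory in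
lemma radial3 (G : ℝ → ℝ) :
    ∫ x : EuclideanSpace ℝ (Fin 3), G ‖x‖
      = 4 * π * ∫ y in Set.Ioi (0:ℝ), y ^ 2 * G y := by
  rw [MeasureTheory.integral_fun_norm_addHaar (volume : Measure (EuclideanSpace ℝ (Fin 3))) G]
  simp only [finrank_euclideanSpace, Fintype.card_fin, measureReal_def, vol_ball3, nsmul_eq_mul, smul_eq_mul]
  norm_num
  ring

open MeasureTheory in
/-- the total mass of the absolutely continuous component of the
distribution of the random flight `X₃(t)`:
`∫_{‖x‖ ≤ ct} (λ/(2c))² (1/(π sinh λt)) I₁((λ/c)√(c²t² - ‖x‖²))/√(c²t² - ‖x‖²) dx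
  = 1 - λt/sinh(λt)`. -/
theorem statement11 (lam c t : ℝ) (hlam : 0 < lam) (hc : 0 < c) (ht : 0 < t) :
    (∫ x in Metric.closedBall (0 : EuclideanSpace ℝ (Fin 3)) (c * t),
      (lam / (2 * c)) ^ 2 * (1 / (π * Real.sinh (lam * t))) *
        besselI1 (lam / c * Real.sqrt (c ^ 2 * t ^ 2 - ‖x‖ ^ 2)) /
        Real.sqrt (c ^ 2 * t ^ 2 - ‖x‖ ^ 2))
    = 1 - lam * t / Real.sinh (lam * t) := by
  have hsinh : 0 < Real.sinh (lam * t) := Real.sinh_pos_iff.2 (by positivity)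
  set R : ℝ := c * t with hR
  have hRpos : 0 < R := by positivity
  set C : ℝ := (lam / (2 * c)) ^ 2 * (1 / (π * Real.sinh (lam * t))) with hC
  set a : ℝ := lam / c with ha
  set G : ℝ → ℝ := fun r => C * besselI1 (a * Real.sqrt (c ^ 2 * t ^ 2 - r ^ 2)) /
      Real.sqrt (c ^ 2 * t ^ 2 - r ^ 2) with hG
  have hR2 : c ^ 2 * t ^ 2 = R ^ 2 := by rw [hR]; ring
  have hGdef : (fun x : EuclideanSpace ℝ (Fin 3) =>
      C * besselI1 (a * Real.sqrt (c ^ 2 * t ^ 2 - ‖x‖ ^ 2)) /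
        Real.sqrt (c ^ 2 * t ^ 2 - ‖x‖ ^ 2)) = fun x => G ‖x‖ := by
    funext x; rw [hG]
  have hGzero : ∀ r : ℝ, R ≤ r → G r = 0 := by
    intro r hr
    have h1 : c ^ 2 * t ^ 2 - r ^ 2 ≤ 0 := by
      rw [hR2]
      nlinarith [hRpos]
    have h2 : Real.sqrt (c ^ 2 * t ^ 2 - r ^ 2) = 0 := Real.sqrt_eq_zero_of_nonpos h1
    rw [hG]
    simp only [h2, div_zero]
  -- the set integral equals the full integral
  rw [hGdef, setIntegral_eq_integral_of_forall_compl_eq_zero (by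
    intro x hx
    apply hGzero
    simp only [Metric.mem_closedBall, dist_zero_right, not_le] at hx
    exact hx.le)]
  rw [radial3 G]
  -- restrict to Ioo 0 R
  rw [setIntegral_eq_of_subset_of_forall_diff_eq_zero measurableSet_Ioi
    Set.Ioo_subset_Ioi_self (by
      intro y hy
      have hy1 : R ≤ y := by
        rcases hy with ⟨hy1, hy2⟩
        simp only [Set.mem_Ioo, not_and, not_lt] at hy2
        exact hy2 hy1
      rw [hGzero y hy1, mul_zero])]
  -- series expansion of the integrand
  set g : ℕ → ℝ → ℝ := fun k y =>
    C * ((a/2)^(2*k+1) / ((k.factorial : ℝ) * ((k+1).factorial : ℝ))) *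
      (y^2 * (R^2 - y^2)^k) with hg
  have hpt : ∀ y ∈ Set.Ioo (0:ℝ) R, y ^ 2 * G y = ∑' k, g k y := by
    intro y hy
    have hy2 : 0 < R^2 - y^2 := by nlinarith [hy.1, hy.2]
    have hq0 : 0 < Real.sqrt (R^2 - y^2) := Real.sqrt_pos.2 hy2
    have hq2 : Real.sqrt (R^2 - y^2) ^ 2 = R^2 - y^2 := Real.sq_sqrt hy2.le
    rw [hG]
    simp only [hR2]
    set q := Real.sqrt (R^2 - y^2) with hqdef
    rw [besselI1, mul_div_assoc, ← tsum_div_const, ← tsum_mul_left, ← tsum_mul_left]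
    apply tsum_congr
    intro k
    rw [hg]
    rw [show a*q/2 = (a/2)*q by ring, mul_pow,
      show q^(2*k+1) = (R^2-y^2)^k * q by rw [pow_succ, pow_mul, hq2]]
    have hqne : q ≠ 0 := ne_of_gt hq0
    field_simp
  rw [setIntegral_congr_fun measurableSet_Ioo hpt]
  -- each term's integral
  have hint : ∀ k, IntegrableOn (g k) (Set.Ioo 0 R) volume := by
    intro k
    exact (Continuous.integrableOn_Icc (by rw [hg]; fun_prop)).mono_set Set.Ioo_subset_Icc_self
  have hfacne : ∀ m : ℕ, ((m).factorial : ℝ) ≠ 0 :=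
    fun m => Nat.cast_ne_zero.2 (Nat.factorial_ne_zero _)
  have hval : ∀ k, (∫ y in Set.Ioo (0:ℝ) R, g k y)
      = (lam*t)^(2*k+3) / ((2*k+3).factorial : ℝ) / (4*π*Real.sinh (lam*t)) := by
    intro k
    rw [← MeasureTheory.integral_Ioc_eq_integral_Ioo,
      ← intervalIntegral.integral_of_le hRpos.le]
    simp only [hg]
    rw [intervalIntegral.integral_const_mul, integral_sq_mul_pow]
    rw [hC, ha, hR]
    have h1 := hfacne k
    have h2 := hfacne (k+1)
    have h3 := hfacne (2*k+3)
    have hsne : Real.sinh (lam*t) ≠ 0 := ne_of_gt hsinh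
    have hcne : c ≠ 0 := ne_of_gt hc
    field_simp
    rw [div_pow]
    field_simp
    ring
  have hV : HasSum (fun k : ℕ =>
      (lam*t)^(2*k+3) / ((2*k+3).factorial : ℝ) / (4*π*Real.sinh (lam*t)))
      ((Real.sinh (lam*t) - lam*t)/(4*π*Real.sinh (lam*t))) :=
    (hasSum_sinh_sub (lam*t)).div_const _
  have hnorm : ∀ k, (∫ y in Set.Ioo (0:ℝ) R, ‖g k y‖) = ∫ y in Set.Ioo (0:ℝ) R, g k y := by
    intro k
    apply setIntegral_congr_fun measurableSet_Ioo
    intro y hy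
    apply Real.norm_of_nonneg
    have h1 : (0:ℝ) ≤ R^2 - y^2 := by nlinarith [hy.1, hy.2]
    have hC0 : 0 ≤ C := by rw [hC]; positivity
    have ha0 : (0:ℝ) ≤ a/2 := by rw [ha]; positivity
    rw [hg]
    exact mul_nonneg (mul_nonneg hC0 (div_nonneg (pow_nonneg ha0 _) (by positivity)))
      (mul_nonneg (sq_nonneg y) (pow_nonneg h1 k))
  have hswap : (∫ y in Set.Ioo (0:ℝ) R, ∑' k, g k y)
      = ∑' k, ∫ y in Set.Ioo (0:ℝ) R, g k y := by
    refine (MeasureTheory.integral_tsum_of_summable_integral_norm hint ?_).symm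
    have : (fun k : ℕ => ∫ y in Set.Ioo (0:ℝ) R, ‖g k y‖)
        = fun k => (lam*t)^(2*k+3) / ((2*k+3).factorial : ℝ) / (4*π*Real.sinh (lam*t)) := by
      funext k; rw [hnorm, hval]
    rw [this]
    exact hV.summable
  rw [hswap]
  have : (fun k : ℕ => ∫ y in Set.Ioo (0:ℝ) R, g k y)
      = fun k => (lam*t)^(2*k+3) / ((2*k+3).factorial : ℝ) / (4*π*Real.sinh (lam*t)) := by
    funext k; rw [hval]
  rw [this, hV.tsum_eq]
  have hsne : Real.sinh (lam*t) ≠ 0 := ne_of_gt hsinh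
  have hpne : π ≠ 0 := ne_of_gt pi_pos
  field_simp
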